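/- Let 𝒜 = {A₁,…,A_m} be an arrangement of finite cameras with distinct collinear centers and nonempty chiral domain D_𝒜. Let e = (e₁,…,e_m) ∈ (ℙ²)^m be the common image under φ_𝒜 of the points of the common baseline other than the centers (whose coordinates are the epipoles). Then X_𝒜 ∖ {e} = (J_𝒜 ∩ C_𝒜) ∖ {e}, and the Euclidean closure of X_𝒜 in (ℙ²)^m is contained in C_𝒜. -/

import Mathlib

open Matrix

noncomputable section

/-- Left 3x3 block `G` of a 3x4 camera matrix `A = [G | t]`. -/
def leftBlock (A : Matrix (Fin 3) (Fin 4) ℝ) : Matrix (Fin 3) (Fin 3) ℝ :=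
  Matrix.of fun i j => A i j.castSucc

/-- Last column `t` of a 3x4 camera matrix `A = [G | t]`. -/
def tCol (A : Matrix (Fin 3) (Fin 4) ℝ) : Fin 3 → ℝ := fun i => A i 3

/-- A camera is finite if its left 3x3 block is invertible. -/
def FiniteCam (A : Matrix (Fin 3) (Fin 4) ℝ) : Prop := (leftBlock A).det ≠ 0

/-- The center `(-G⁻¹ t, 1)` of a finite camera. -/
def camCenter (A : Matrix (Fin 3) (Fin 4) ℝ) : Fin 4 → ℝ :=
  Fin.snoc (-((leftBlock A)⁻¹ *ᵥ tCol A)) 1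

/-- The principal ray `det G • (third row of A)`. -/
def principalRay (A : Matrix (Fin 3) (Fin 4) ℝ) : Fin 4 → ℝ :=
  (leftBlock A).det • A 2

/-- `n_∞ = (0,0,0,1)`. -/
def nInf : Fin 4 → ℝ := Fin.snoc (0 : Fin 3 → ℝ) 1

/-- The chiral domain `D_𝒜`: the closure, within `ℝ⁴ ∖ {0}` (i.e. ambient closure
intersected with `ℝ⁴ ∖ {0}`), of the set of finite vectors (last coordinate nonzero)
having positive depth in every camera of the arrangement. -/
def chiralDomain {m : ℕ} (A : Fin m → Matrix (Fin 3) (Fin 4) ℝ) : Set (Fin 4 → ℝ) :=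
  closure {q : Fin 4 → ℝ | nInf ⬝ᵥ q ≠ 0 ∧ ∀ i, 0 < (principalRay (A i) ⬝ᵥ q) * (nInf ⬝ᵥ q)}
    ∩ {q : Fin 4 → ℝ | q ≠ 0}

/-- The joint image `J_𝒜` (at the level of representatives): tuples of nonzero vectors
representing `(A₁ q, …, A_m q)` for some `q ∈ ℙ³` that is not a camera center. -/
def jointImage {m : ℕ} (A : Fin m → Matrix (Fin 3) (Fin 4) ℝ) :
    Set (Fin m → Fin 3 → ℝ) :=
  {p | (∀ i, p i ≠ 0) ∧
    ∃ q : Fin 4 → ℝ, q ≠ 0 ∧ ∀ i, ∃ c : ℝ, c ≠ 0 ∧ p i = c • (A i *ᵥ q)}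

/-- The chiral joint image `X_𝒜 = φ_𝒜(D_𝒜)` (at the level of representatives). -/
def chiralJointImage {m : ℕ} (A : Fin m → Matrix (Fin 3) (Fin 4) ℝ) :
    Set (Fin m → Fin 3 → ℝ) :=
  {p | (∀ i, p i ≠ 0) ∧
    ∃ q ∈ chiralDomain A, ∀ i, ∃ c : ℝ, c ≠ 0 ∧ p i = c • (A i *ᵥ q)}

/-- `a_i = G_i⁻¹ p_i`. -/
def aVec (A : Matrix (Fin 3) (Fin 4) ℝ) (p : Fin 3 → ℝ) : Fin 3 → ℝ :=
  (leftBlock A)⁻¹ *ᵥ p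

/-- `b_ij = G_i⁻¹ t_i - G_j⁻¹ t_j`. -/
def bVec (A B : Matrix (Fin 3) (Fin 4) ℝ) : Fin 3 → ℝ :=
  (leftBlock A)⁻¹ *ᵥ tCol A - (leftBlock B)⁻¹ *ᵥ tCol B

/-- The chirality constraint set `C_𝒜`, cut out by the biquadratic inequalities
`det(G_i)·p_{i3}·((a_i × a_j)ᵀ(b_ij × a_j)) ≥ 0` and
`det(G_i)·det(G_j)·p_{i3}·p_{j3}·((b_ij × a_i)ᵀ(b_ij × a_j)) ≥ 0` for all `i, j`. -/
def CSet {m : ℕ} (A : Fin m → Matrix (Fin 3) (Fin 4) ℝ) :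
    Set (Fin m → Fin 3 → ℝ) :=
  {p | ∀ i j,
    0 ≤ (leftBlock (A i)).det * p i 2 *
        ((aVec (A i) (p i) ⨯₃ aVec (A j) (p j)) ⬝ᵥ (bVec (A i) (A j) ⨯₃ aVec (A j) (p j))) ∧
    0 ≤ (leftBlock (A i)).det * (leftBlock (A j)).det * p i 2 * p j 2 *
        ((bVec (A i) (A j) ⨯₃ aVec (A i) (p i)) ⬝ᵥ (bVec (A i) (A j) ⨯₃ aVec (A j) (p j)))}

/-- `E_j`: tuples whose `i`-th coordinate, for `i ≠ j`, represents the epipole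
`e_ij = A_i c_j`, with free `j`-th coordinate. -/
def Eset {m : ℕ} (A : Fin m → Matrix (Fin 3) (Fin 4) ℝ) (j : Fin m) :
    Set (Fin m → Fin 3 → ℝ) :=
  {p | (∀ i, p i ≠ 0) ∧ ∀ i, i ≠ j → ∃ c : ℝ, c ≠ 0 ∧ p i = c • (A i *ᵥ camCenter (A j))}


namespace Chiral

lemma fin4_last : (Fin.last 3) = (3 : Fin 4) := rfl

lemma nInf_apply3 : nInf 3 = 1 := rfl

lemma nInf_dot (q : Fin 4 → ℝ) : nInf ⬝ᵥ q = q 3 := by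
  have h0 : nInf 0 = 0 := rfl
  have h1 : nInf 1 = 0 := rfl
  have h2 : nInf 2 = 0 := rfl
  simp [dotProduct, Fin.sum_univ_four, h0, h1, h2, nInf_apply3]

lemma principalRay_dot (A : Matrix (Fin 3) (Fin 4) ℝ) (q : Fin 4 → ℝ) :
    principalRay A ⬝ᵥ q = (leftBlock A).det * (A *ᵥ q) 2 := by
  simp [principalRay, mulVec, dotProduct, smul_dotProduct, Finset.mul_sum, mul_assoc]

lemma mulVec_decomp (A : Matrix (Fin 3) (Fin 4) ℝ) (q : Fin 4 → ℝ) :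
    A *ᵥ q = leftBlock A *ᵥ (fun k => q k.castSucc) + q 3 • tCol A := by
  funext i
  simp [mulVec, dotProduct, Fin.sum_univ_castSucc, leftBlock, tCol, fin4_last, mul_comm]

/-- `d_A(q) = G_A⁻¹ (A q)`. -/
def dv (A : Matrix (Fin 3) (Fin 4) ℝ) (q : Fin 4 → ℝ) : Fin 3 → ℝ :=
  (leftBlock A)⁻¹ *ᵥ (A *ᵥ q)

lemma dv_eq (A : Matrix (Fin 3) (Fin 4) ℝ) (hA : FiniteCam A) (q : Fin 4 → ℝ) :
    dv A q = (fun k => q k.castSucc) + q 3 • ((leftBlock A)⁻¹ *ᵥ tCol A) := by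
  have hu : IsUnit (leftBlock A).det := isUnit_iff_ne_zero.mpr hA
  rw [dv, mulVec_decomp, mulVec_add, mulVec_smul, mulVec_mulVec,
    Matrix.nonsing_inv_mul _ hu, one_mulVec]

lemma dv_sub (A B : Matrix (Fin 3) (Fin 4) ℝ) (hA : FiniteCam A) (hB : FiniteCam B)
    (q : Fin 4 → ℝ) : dv A q - dv B q = q 3 • bVec A B := by
  rw [dv_eq A hA, dv_eq B hB, bVec, smul_sub]
  abel

lemma qdecomp (A : Matrix (Fin 3) (Fin 4) ℝ) (hA : FiniteCam A) (q : Fin 4 → ℝ) :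
    q = Fin.snoc (dv A q) 0 + q 3 • camCenter A := by
  funext k
  refine Fin.lastCases ?_ (fun j => ?_) k
  · simp only [Pi.add_apply, Pi.smul_apply, smul_eq_mul, Fin.snoc_last, camCenter]
    rw [fin4_last]
    ring
  · simp [dv_eq A hA, camCenter, mul_comm]

lemma center_sub (A B : Matrix (Fin 3) (Fin 4) ℝ) :
    camCenter B - camCenter A = Fin.snoc (bVec A B) (0:ℝ) := by
  funext k
  refine Fin.lastCases ?_ (fun j => ?_) k
  · simp only [Pi.sub_apply, camCenter, Fin.snoc_last]; simp
  · simp [camCenter, bVec]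
    ring

lemma snoc_smul (v : Fin 3 → ℝ) (c : ℝ) :
    (Fin.snoc (c • v) (0:ℝ) : Fin 4 → ℝ) = c • (Fin.snoc v (0:ℝ) : Fin 4 → ℝ) := by
  funext k
  refine Fin.lastCases ?_ (fun j => ?_) k <;>
    simp only [Pi.smul_apply, Fin.snoc_last, Fin.snoc_castSucc, smul_eq_mul, mul_zero] <;> simp

lemma mulVec_center (A : Matrix (Fin 3) (Fin 4) ℝ) (hA : FiniteCam A) :
    A *ᵥ camCenter A = 0 := by
  have hu : IsUnit (leftBlock A).det := isUnit_iff_ne_zero.mpr hA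
  rw [mulVec_decomp]
  have h1 : (fun k => camCenter A k.castSucc) = -((leftBlock A)⁻¹ *ᵥ tCol A) := by
    funext j; simp [camCenter]
  have h2 : camCenter A 3 = 1 := by
    rw [camCenter, ← fin4_last, Fin.snoc_last]
  rw [h1, h2, mulVec_neg, mulVec_mulVec, Matrix.mul_nonsing_inv _ hu, one_mulVec, one_smul,
    neg_add_cancel]

lemma bVec_ne_zero (A B : Matrix (Fin 3) (Fin 4) ℝ) (h : camCenter A ≠ camCenter B) :
    bVec A B ≠ 0 := by
  intro h0
  apply h
  have hs := center_sub A B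
  rw [h0] at hs
  have hz : (Fin.snoc (0 : Fin 3 → ℝ) (0:ℝ) : Fin 4 → ℝ) = 0 := by
    funext k
    refine Fin.lastCases ?_ (fun j => ?_) k <;>
      simp only [Fin.snoc_last, Fin.snoc_castSucc, Pi.zero_apply] <;> simp
  rw [hz] at hs
  exact (sub_eq_zero.mp hs).symm

/-- first chirality expression with representative scalars one. -/
def F1 (A B : Matrix (Fin 3) (Fin 4) ℝ) (q : Fin 4 → ℝ) : ℝ :=
  (leftBlock A).det * (A *ᵥ q) 2 *
    ((dv A q ⨯₃ dv B q) ⬝ᵥ (bVec A B ⨯₃ dv B q))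

def F2 (A B : Matrix (Fin 3) (Fin 4) ℝ) (q : Fin 4 → ℝ) : ℝ :=
  (leftBlock A).det * (leftBlock B).det * (A *ᵥ q) 2 * (B *ᵥ q) 2 *
    ((bVec A B ⨯₃ dv A q) ⬝ᵥ (bVec A B ⨯₃ dv B q))

lemma cross_smul_left (c : ℝ) (u v : Fin 3 → ℝ) : (c • u) ⨯₃ v = c • (u ⨯₃ v) := by
  rw [LinearMap.map_smul, LinearMap.smul_apply]

lemma cross_smul_right (c : ℝ) (u v : Fin 3 → ℝ) : u ⨯₃ (c • v) = c • (u ⨯₃ v) :=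
  LinearMap.map_smul _ _ _

lemma aVec_smul (A : Matrix (Fin 3) (Fin 4) ℝ) (c : ℝ) (v : Fin 3 → ℝ) :
    aVec A (c • v) = c • aVec A v := by
  simp [aVec, mulVec_smul]

lemma aVec_image (A : Matrix (Fin 3) (Fin 4) ℝ) (q : Fin 4 → ℝ) (c : ℝ) :
    aVec A (c • (A *ᵥ q)) = c • dv A q := aVec_smul A c (A *ᵥ q)

lemma E1_eq (A B : Matrix (Fin 3) (Fin 4) ℝ) (q : Fin 4 → ℝ) (c d : ℝ) :
    (leftBlock A).det * (c • (A *ᵥ q)) 2 *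
      ((aVec A (c • (A *ᵥ q)) ⨯₃ aVec B (d • (B *ᵥ q))) ⬝ᵥ
        (bVec A B ⨯₃ aVec B (d • (B *ᵥ q)))) = c ^ 2 * d ^ 2 * F1 A B q := by
  rw [aVec_image, aVec_image, cross_smul_left, cross_smul_right, cross_smul_right]
  simp only [smul_dotProduct, dotProduct_smul, Pi.smul_apply, smul_eq_mul, smul_smul, F1]
  ring

lemma E2_eq (A B : Matrix (Fin 3) (Fin 4) ℝ) (q : Fin 4 → ℝ) (c d : ℝ) :
    (leftBlock A).det * (leftBlock B).det * (c • (A *ᵥ q)) 2 * (d • (B *ᵥ q)) 2 *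
      ((bVec A B ⨯₃ aVec A (c • (A *ᵥ q))) ⬝ᵥ (bVec A B ⨯₃ aVec B (d • (B *ᵥ q))))
      = c ^ 2 * d ^ 2 * F2 A B q := by
  rw [aVec_image, aVec_image, cross_smul_right, cross_smul_right]
  simp only [smul_dotProduct, dotProduct_smul, Pi.smul_apply, smul_eq_mul, smul_smul, F2]
  ring

lemma q3_smul_cross_bR (A B : Matrix (Fin 3) (Fin 4) ℝ) (hA : FiniteCam A) (hB : FiniteCam B)
    (q : Fin 4 → ℝ) : q 3 • (bVec A B ⨯₃ dv B q) = dv A q ⨯₃ dv B q := by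
  rw [← cross_smul_left, ← dv_sub A B hA hB, LinearMap.map_sub, LinearMap.sub_apply,
    cross_self, sub_zero]

lemma q3_smul_cross_bL (A B : Matrix (Fin 3) (Fin 4) ℝ) (hA : FiniteCam A) (hB : FiniteCam B)
    (q : Fin 4 → ℝ) : q 3 • (bVec A B ⨯₃ dv A q) = dv A q ⨯₃ dv B q := by
  rw [← cross_smul_left, ← dv_sub A B hA hB, LinearMap.map_sub, LinearMap.sub_apply,
    cross_self, zero_sub, cross_anticomm]

lemma q3_mul_F1 (A B : Matrix (Fin 3) (Fin 4) ℝ) (hA : FiniteCam A) (hB : FiniteCam B)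
    (q : Fin 4 → ℝ) :
    q 3 * F1 A B q = (principalRay A ⬝ᵥ q) *
      ((dv A q ⨯₃ dv B q) ⬝ᵥ (dv A q ⨯₃ dv B q)) := by
  rw [principalRay_dot, F1, ← q3_smul_cross_bR A B hA hB, dotProduct_smul]
  simp only [smul_eq_mul]
  ring

lemma q3sq_mul_F2 (A B : Matrix (Fin 3) (Fin 4) ℝ) (hA : FiniteCam A) (hB : FiniteCam B)
    (q : Fin 4 → ℝ) :
    q 3 ^ 2 * F2 A B q = (principalRay A ⬝ᵥ q) * (principalRay B ⬝ᵥ q) *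
      ((dv A q ⨯₃ dv B q) ⬝ᵥ (dv A q ⨯₃ dv B q)) := by
  have h : (q 3 • (bVec A B ⨯₃ dv A q)) ⬝ᵥ (q 3 • (bVec A B ⨯₃ dv B q)) =
      q 3 ^ 2 * ((bVec A B ⨯₃ dv A q) ⬝ᵥ (bVec A B ⨯₃ dv B q)) := by
    simp only [smul_dotProduct, dotProduct_smul, smul_eq_mul]
    ring
  rw [q3_smul_cross_bL A B hA hB, q3_smul_cross_bR A B hA hB] at h
  rw [principalRay_dot, principalRay_dot, F2]
  linear_combination (-((leftBlock A).det * (A *ᵥ q) 2 * ((leftBlock B).det * (B *ᵥ q) 2))) * h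

lemma F2_eq (A B : Matrix (Fin 3) (Fin 4) ℝ) (q : Fin 4 → ℝ) :
    F2 A B q = (principalRay A ⬝ᵥ q) * (principalRay B ⬝ᵥ q) *
      ((bVec A B ⨯₃ dv A q) ⬝ᵥ (bVec A B ⨯₃ dv B q)) := by
  rw [F2, principalRay_dot, principalRay_dot]
  ring

lemma dot_self_nonneg (v : Fin 3 → ℝ) : 0 ≤ v ⬝ᵥ v :=
  Finset.sum_nonneg fun i _ => mul_self_nonneg (v i)

lemma dot_self_pos {v : Fin 3 → ℝ} (hv : v ≠ 0) : 0 < v ⬝ᵥ v :=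
  lt_of_le_of_ne (dot_self_nonneg v) (fun h => hv (dotProduct_self_eq_zero.mp h.symm))

lemma not_linearIndependent_pair {u v : Fin 3 → ℝ} (h : u ⨯₃ v = 0) :
    ∃ s t : ℝ, s • u + t • v = 0 ∧ ¬(s = 0 ∧ t = 0) := by
  have h2 : ¬ LinearIndependent ℝ ![u, v] := by
    intro hli
    exact (crossProduct_ne_zero_iff_linearIndependent.mpr hli) h
  rw [LinearIndependent.pair_iff] at h2
  push_neg at h2
  obtain ⟨s, t, hst, hne⟩ := h2
  exact ⟨s, t, hst, fun ⟨h1, h2'⟩ => hne h1 h2'⟩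

lemma snoc_mem_span (A B : Matrix (Fin 3) (Fin 4) ℝ) {v : Fin 3 → ℝ} {α : ℝ}
    (hv : v = α • bVec A B) :
    (Fin.snoc v (0:ℝ) : Fin 4 → ℝ) ∈ Submodule.span ℝ {camCenter A, camCenter B} := by
  rw [hv, snoc_smul, ← center_sub]
  exact Submodule.smul_mem _ _ (Submodule.sub_mem _
    (Submodule.subset_span (Set.mem_insert_of_mem _ rfl))
    (Submodule.subset_span (Set.mem_insert _ _)))

/-- finite case: if two rays are parallel, `q` is on the baseline of the two cameras. -/
lemma mem_span_of_cross_eq_zero (A B : Matrix (Fin 3) (Fin 4) ℝ)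
    (hA : FiniteCam A) (hB : FiniteCam B) (q : Fin 4 → ℝ) (hq3 : q 3 ≠ 0)
    (hbne : bVec A B ≠ 0) (hcross : dv A q ⨯₃ dv B q = 0) :
    q ∈ Submodule.span ℝ {camCenter A, camCenter B} := by
  obtain ⟨s, t, hst, hne⟩ := not_linearIndependent_pair hcross
  have hd : dv A q = dv B q + q 3 • bVec A B := by
    have := dv_sub A B hA hB q
    linear_combination (norm := module) this
  by_cases hsum : s + t = 0
  · exfalso
    have ht : t = -s := by linarith
    rw [ht, hd] at hst
    have : (s * q 3) • bVec A B = 0 := by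
      linear_combination (norm := module) hst
    rcases smul_eq_zero.mp this with h | h
    · have hs0 : s = 0 := by
        rcases mul_eq_zero.mp h with h' | h'
        · exact h'
        · exact absurd h' hq3
      exact hne ⟨hs0, by rw [ht, hs0, neg_zero]⟩
    · exact hbne h
  · have hdB : dv B q = ((s + t)⁻¹ * -(s * q 3)) • bVec A B := by
      rw [hd] at hst
      have h1 : (s + t) • dv B q = (-(s * q 3)) • bVec A B := by
        linear_combination (norm := module) hst
      rw [← smul_smul, ← h1, smul_smul, inv_mul_cancel₀ hsum, one_smul]
    have h1 : (Fin.snoc (dv A q) (0:ℝ) : Fin 4 → ℝ) ∈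
        Submodule.span ℝ {camCenter A, camCenter B} := by
      refine snoc_mem_span A B (α := ((s + t)⁻¹ * -(s * q 3)) + q 3) ?_
      rw [hd, hdB, add_smul]
    rw [qdecomp A hA q]
    exact Submodule.add_mem _ h1 (Submodule.smul_mem _ _
      (Submodule.subset_span (Set.mem_insert _ _)))

/-- infinite case -/
lemma mem_span_of_cross_eq_zero' (A B : Matrix (Fin 3) (Fin 4) ℝ)
    (hA : FiniteCam A) (hB : FiniteCam B) (q : Fin 4 → ℝ) (hq3 : q 3 = 0)
    (hbne : bVec A B ≠ 0) (hcross : bVec A B ⨯₃ dv B q = 0) :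
    q ∈ Submodule.span ℝ {camCenter A, camCenter B} := by
  obtain ⟨s, t, hst, hne⟩ := not_linearIndependent_pair hcross
  by_cases ht : t = 0
  · exfalso
    rw [ht] at hst
    have : s • bVec A B = 0 := by linear_combination (norm := module) hst
    rcases smul_eq_zero.mp this with h | h
    · exact hne ⟨h, ht⟩
    · exact hbne h
  · have hdB : dv B q = (t⁻¹ * -s) • bVec A B := by
      have h1 : t • dv B q = (-s) • bVec A B := by
        linear_combination (norm := module) hst
      rw [← smul_smul, ← h1, smul_smul, inv_mul_cancel₀ ht, one_smul]
    have h1 : (Fin.snoc (dv B q) (0:ℝ) : Fin 4 → ℝ) ∈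
        Submodule.span ℝ {camCenter A, camCenter B} := snoc_mem_span A B hdB
    have hq : q = Fin.snoc (dv B q) (0:ℝ) := by
      conv_lhs => rw [qdecomp B hB q]
      rw [hq3, zero_smul, add_zero]
    rw [hq]
    exact h1

section Topology

variable {X : Type*} [TopologicalSpace X]

lemma continuous_cross {f g : X → Fin 3 → ℝ} (hf : Continuous f) (hg : Continuous g) :
    Continuous fun x => f x ⨯₃ g x := by
  simp only [cross_apply]
  refine continuous_pi fun i => ?_
  have h : ∀ (a b : Fin 3), Continuous fun x => f x a * g x b - f x b * g x a :=
    fun a b => (((continuous_apply a).comp hf).mul ((continuous_apply b).comp hg)).sub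
      (((continuous_apply b).comp hf).mul ((continuous_apply a).comp hg))
  fin_cases i
  · simpa using h 1 2
  · simpa using h 2 0
  · simpa using h 0 1

lemma continuous_dv (A : Matrix (Fin 3) (Fin 4) ℝ) : Continuous fun q => dv A q :=
  (continuous_const.matrix_mulVec (continuous_const.matrix_mulVec continuous_id))

lemma continuous_F1 (A B : Matrix (Fin 3) (Fin 4) ℝ) : Continuous (F1 A B) := by
  refine Continuous.mul (continuous_const.mul ?_) (Continuous.dotProduct ?_ ?_)
  · exact (continuous_apply 2).comp (continuous_const.matrix_mulVec continuous_id)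
  · exact continuous_cross (continuous_dv A) (continuous_dv B)
  · exact continuous_cross continuous_const (continuous_dv B)

lemma continuous_F2 (A B : Matrix (Fin 3) (Fin 4) ℝ) : Continuous (F2 A B) := by
  refine Continuous.mul (Continuous.mul (continuous_const.mul ?_) ?_)
    (Continuous.dotProduct ?_ ?_)
  · exact (continuous_apply 2).comp (continuous_const.matrix_mulVec continuous_id)
  · exact (continuous_apply 2).comp (continuous_const.matrix_mulVec continuous_id)
  · exact continuous_cross continuous_const (continuous_dv A)
  · exact continuous_cross continuous_const (continuous_dv B)

end Topology

def Fset {m : ℕ} (A : Fin m → Matrix (Fin 3) (Fin 4) ℝ) : Set (Fin 4 → ℝ) :=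
  {q | ∀ i j, 0 ≤ F1 (A i) (A j) q ∧ 0 ≤ F2 (A i) (A j) q}

lemma isClosed_Fset {m : ℕ} (A : Fin m → Matrix (Fin 3) (Fin 4) ℝ) : IsClosed (Fset A) := by
  have : Fset A = ⋂ i, ⋂ j, ({q | 0 ≤ F1 (A i) (A j) q} ∩ {q | 0 ≤ F2 (A i) (A j) q}) := by
    ext q
    simp [Fset, Set.mem_iInter]
  rw [this]
  exact isClosed_iInter fun i => isClosed_iInter fun j =>
    (isClosed_le continuous_const (continuous_F1 _ _)).inter
      (isClosed_le continuous_const (continuous_F2 _ _))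

lemma isClosed_CSet {m : ℕ} (A : Fin m → Matrix (Fin 3) (Fin 4) ℝ) : IsClosed (CSet A) := by
  have hc : ∀ i : Fin m, Continuous fun p : Fin m → Fin 3 → ℝ => aVec (A i) (p i) :=
    fun i => continuous_const.matrix_mulVec (continuous_apply i)
  have hp2 : ∀ i : Fin m, Continuous fun p : Fin m → Fin 3 → ℝ => p i 2 :=
    fun i => (continuous_apply 2).comp (continuous_apply i)
  have : CSet A = ⋂ i, ⋂ j,
      ({p : Fin m → Fin 3 → ℝ | 0 ≤ (leftBlock (A i)).det * p i 2 *
        ((aVec (A i) (p i) ⨯₃ aVec (A j) (p j)) ⬝ᵥ (bVec (A i) (A j) ⨯₃ aVec (A j) (p j)))} ∩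
      {p | 0 ≤ (leftBlock (A i)).det * (leftBlock (A j)).det * p i 2 * p j 2 *
        ((bVec (A i) (A j) ⨯₃ aVec (A i) (p i)) ⬝ᵥ (bVec (A i) (A j) ⨯₃ aVec (A j) (p j)))}) := by
    ext p
    simp [CSet, Set.mem_iInter]
  rw [this]
  refine isClosed_iInter fun i => isClosed_iInter fun j => IsClosed.inter ?_ ?_
  · refine isClosed_le continuous_const ?_
    exact (continuous_const.mul (hp2 i)).mul
      (Continuous.dotProduct (continuous_cross (hc i) (hc j))
        (continuous_cross continuous_const (hc j)))
  · refine isClosed_le continuous_const ?_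
    exact ((continuous_const.mul (hp2 i)).mul (hp2 j)).mul
      (Continuous.dotProduct (continuous_cross continuous_const (hc i))
        (continuous_cross continuous_const (hc j)))

def Sset {m : ℕ} (A : Fin m → Matrix (Fin 3) (Fin 4) ℝ) : Set (Fin 4 → ℝ) :=
  {q : Fin 4 → ℝ | nInf ⬝ᵥ q ≠ 0 ∧ ∀ i, 0 < (principalRay (A i) ⬝ᵥ q) * (nInf ⬝ᵥ q)}

lemma chiralDomain_eq {m : ℕ} (A : Fin m → Matrix (Fin 3) (Fin 4) ℝ) :
    chiralDomain A = closure (Sset A) ∩ {q | q ≠ 0} := rfl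

lemma mem_closure_Sset {m : ℕ} (A : Fin m → Matrix (Fin 3) (Fin 4) ℝ)
    (q q' : Fin 4 → ℝ)
    (h1 : ∀ i, 0 ≤ principalRay (A i) ⬝ᵥ q) (h2 : 0 ≤ nInf ⬝ᵥ q)
    (hq' : q' ∈ Sset A) (h3 : 0 < nInf ⬝ᵥ q') :
    q ∈ closure (Sset A) := by
  have hray : ∀ i, 0 < principalRay (A i) ⬝ᵥ q' := by
    intro i
    have := hq'.2 i
    nlinarith
  have htend : Filter.Tendsto (fun s : ℝ => q + s • q') (nhdsWithin 0 (Set.Ioi 0)) (nhds q) := by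
    have hcont : Continuous fun s : ℝ => q + s • q' :=
      continuous_const.add (continuous_id.smul continuous_const)
    have h' : Filter.Tendsto (fun s : ℝ => q + s • q') (nhds 0) (nhds q) := by
      have := hcont.tendsto 0
      simpa using this
    exact h'.mono_left nhdsWithin_le_nhds
  refine mem_closure_of_tendsto htend ?_
  refine eventually_nhdsWithin_of_forall fun s hs => ?_
  have hs' : (0:ℝ) < s := hs
  constructor
  · rw [dotProduct_add, dotProduct_smul, smul_eq_mul]
    nlinarith
  · intro i
    rw [dotProduct_add, dotProduct_smul, dotProduct_add, dotProduct_smul]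
    simp only [smul_eq_mul]
    have ha := hray i
    have hb := h1 i
    have hA : 0 < principalRay (A i) ⬝ᵥ q + s * (principalRay (A i) ⬝ᵥ q') := by nlinarith
    have hB : 0 < nInf ⬝ᵥ q + s * (nInf ⬝ᵥ q') := by nlinarith
    exact mul_pos hA hB

lemma exists_pos_Sset {m : ℕ} (A : Fin m → Matrix (Fin 3) (Fin 4) ℝ)
    (h : (Sset A).Nonempty) : ∃ q', q' ∈ Sset A ∧ 0 < nInf ⬝ᵥ q' := by
  obtain ⟨q, hq⟩ := h
  rcases lt_or_gt_of_ne hq.1 with h | h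
  · refine ⟨-q, ⟨?_, fun i => ?_⟩, ?_⟩
    · rw [dotProduct_neg]; exact neg_ne_zero.mpr hq.1
    · rw [dotProduct_neg, dotProduct_neg, neg_mul_neg]; exact hq.2 i
    · rw [dotProduct_neg]; linarith
  · exact ⟨q, hq, h⟩

lemma exists_sign {m : ℕ} (w : Fin m → ℝ) (h : ∀ i j, i ≠ j → 0 ≤ w i * w j) :
    ∃ ε : ℝ, (ε = 1 ∨ ε = -1) ∧ ∀ i, 0 ≤ ε * w i := by
  by_cases h0 : ∀ i, w i = 0
  · exact ⟨1, Or.inl rfl, fun i => by rw [h0 i]; simp⟩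
  · push_neg at h0
    obtain ⟨i0, hi0⟩ := h0
    rcases lt_or_gt_of_ne hi0 with hneg | hpos
    · refine ⟨-1, Or.inr rfl, fun i => ?_⟩
      by_cases hii : i = i0
      · subst hii; nlinarith
      · have := h i i0 hii; nlinarith
    · refine ⟨1, Or.inl rfl, fun i => ?_⟩
      by_cases hii : i = i0
      · subst hii; nlinarith
      · have := h i i0 hii; nlinarith

lemma Sset_subset_Fset {m : ℕ} (A : Fin m → Matrix (Fin 3) (Fin 4) ℝ)
    (hfin : ∀ i, FiniteCam (A i)) : Sset A ⊆ Fset A := by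
  rintro q ⟨hq3, hdep⟩
  rw [nInf_dot] at hq3
  intro i j
  have hq3sq : 0 < q 3 ^ 2 := lt_of_le_of_ne (sq_nonneg _) (Ne.symm (pow_ne_zero 2 hq3))
  have hdi := hdep i
  have hdj := hdep j
  rw [nInf_dot] at hdi hdj
  have hXn := dot_self_nonneg (dv (A i) q ⨯₃ dv (A j) q)
  constructor
  · have h := q3_mul_F1 (A i) (A j) (hfin i) (hfin j) q
    have key : q 3 ^ 2 * F1 (A i) (A j) q = ((principalRay (A i) ⬝ᵥ q) * q 3) *
        ((dv (A i) q ⨯₃ dv (A j) q) ⬝ᵥ (dv (A i) q ⨯₃ dv (A j) q)) := by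
      linear_combination (q 3) * h
    have h5 : 0 ≤ q 3 ^ 2 * F1 (A i) (A j) q := by
      rw [key]
      exact mul_nonneg hdi.le hXn
    nlinarith [h5, hq3sq]
  · have h := q3sq_mul_F2 (A i) (A j) (hfin i) (hfin j) q
    have key : q 3 ^ 2 * (q 3 ^ 2 * F2 (A i) (A j) q) =
        (((principalRay (A i) ⬝ᵥ q) * q 3) * ((principalRay (A j) ⬝ᵥ q) * q 3)) *
        ((dv (A i) q ⨯₃ dv (A j) q) ⬝ᵥ (dv (A i) q ⨯₃ dv (A j) q)) := by
      linear_combination (q 3 ^ 2) * h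
    have h5 : 0 ≤ q 3 ^ 2 * (q 3 ^ 2 * F2 (A i) (A j) q) := by
      rw [key]
      exact mul_nonneg (mul_nonneg hdi.le hdj.le) hXn
    nlinarith [h5, mul_pos hq3sq hq3sq]

lemma X_subset_C {m : ℕ} (A : Fin m → Matrix (Fin 3) (Fin 4) ℝ)
    (hfin : ∀ i, FiniteCam (A i)) : chiralJointImage A ⊆ CSet A := by
  rintro p ⟨hp0, q, hq, hrep⟩
  have hqF : q ∈ Fset A :=
    closure_minimal (Sset_subset_Fset A hfin) (isClosed_Fset A) hq.1
  intro i j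
  obtain ⟨ci, hci, hpi⟩ := hrep i
  obtain ⟨cj, hcj, hpj⟩ := hrep j
  constructor
  · rw [hpi, hpj, E1_eq]
    exact mul_nonneg (mul_nonneg (sq_nonneg ci) (sq_nonneg cj)) ((hqF i j).1)
  · rw [hpi, hpj, E2_eq]
    exact mul_nonneg (mul_nonneg (sq_nonneg ci) (sq_nonneg cj)) ((hqF i j).2)

lemma mem_X {m : ℕ} (A : Fin m → Matrix (Fin 3) (Fin 4) ℝ) (p : Fin m → Fin 3 → ℝ)
    (hp0 : ∀ i, p i ≠ 0) (q : Fin 4 → ℝ) (hq0 : q ≠ 0) (ε : ℝ) (hε : ε = 1 ∨ ε = -1)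
    (hrep : ∀ i, ∃ c : ℝ, c ≠ 0 ∧ p i = c • (A i *ᵥ q))
    (hcl : ε • q ∈ closure (Sset A)) : p ∈ chiralJointImage A := by
  have hεne : ε ≠ 0 := by rcases hε with rfl | rfl <;> norm_num
  refine ⟨hp0, ε • q, ⟨hcl, smul_ne_zero hεne hq0⟩, fun i => ?_⟩
  obtain ⟨c, hc, hpc⟩ := hrep i
  refine ⟨c * ε, mul_ne_zero hc hεne, ?_⟩
  rw [hpc, mulVec_smul, smul_smul]
  rcases hε with rfl | rfl <;> norm_num

end Chiral

/-- collinear-center case. If the distinct centers are collinear, `D_𝒜 ≠ ∅`,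
and `e = (e₁,…,e_m)` is the common image under `φ_𝒜` of the points of the common baseline
other than the centers, then `X_𝒜 ∖ {e} = (J_𝒜 ∩ C_𝒜) ∖ {e}` and the Euclidean closure of
`X_𝒜` in `(ℙ²)^m` is contained in `C_𝒜` (all at the level of representatives). -/
theorem chiralJointImage_eq_of_collinear {m : ℕ} (hm : 2 ≤ m)
    (A : Fin m → Matrix (Fin 3) (Fin 4) ℝ)
    (hfin : ∀ i, FiniteCam (A i))
    (hdist : ∀ i j, i ≠ j → camCenter (A i) ≠ camCenter (A j))
    (hcol : Collinear ℝ (Set.range fun i => camCenter (A i)))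
    (hne : (chiralDomain A).Nonempty)
    (e : Fin m → Fin 3 → ℝ) (he0 : ∀ i, e i ≠ 0)
    (he : ∀ q : Fin 4 → ℝ, q ≠ 0 →
      q ∈ Submodule.span ℝ (Set.range fun i => camCenter (A i)) →
      (∀ j, ¬ ∃ c : ℝ, q = c • camCenter (A j)) →
      ∀ i, ∃ c : ℝ, c ≠ 0 ∧ A i *ᵥ q = c • e i) :
    chiralJointImage A \ {p | ∀ i, ∃ c : ℝ, c ≠ 0 ∧ p i = c • e i}
        = (jointImage A ∩ CSet A) \ {p | ∀ i, ∃ c : ℝ, c ≠ 0 ∧ p i = c • e i} ∧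
      closure (chiralJointImage A) ∩ {p | ∀ i, p i ≠ 0} ⊆ CSet A := by
  classical
  have : Nontrivial (Fin m) := by
    have h1 : 1 < m := hm
    exact Fin.nontrivial_iff_two_le.mpr hm
  -- epipole set
  set ESet : Set (Fin m → Fin 3 → ℝ) := {p | ∀ i, ∃ c : ℝ, c ≠ 0 ∧ p i = c • e i} with hESet
  have hXC : chiralJointImage A ⊆ CSet A := Chiral.X_subset_C A hfin
  -- a positively-oriented point of the open chiral set
  have hSne : (Chiral.Sset A).Nonempty := by
    obtain ⟨q0, hq0⟩ := hne
    rw [Chiral.chiralDomain_eq] at hq0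
    exact closure_nonempty_iff.mp ⟨q0, hq0.1⟩
  obtain ⟨qs, hqs, hqs3⟩ := Chiral.exists_pos_Sset A hSne
  -- the hard inclusion
  have hmain : (jointImage A ∩ CSet A) \ ESet ⊆ chiralJointImage A := by
    rintro p ⟨⟨⟨hp0, q, hq0, hrep⟩, hC⟩, hpe⟩
    by_cases hspan : q ∈ Submodule.span ℝ (Set.range fun i => camCenter (A i))
    · -- on the baseline: either a camera center (impossible) or epipole tuple (excluded)
      exfalso
      by_cases hcent : ∃ k, ∃ c : ℝ, q = c • camCenter (A k)
      · obtain ⟨k, c, rfl⟩ := hcent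
        obtain ⟨ck, hck, hpk⟩ := hrep k
        apply hp0 k
        rw [hpk, mulVec_smul, Chiral.mulVec_center (A k) (hfin k), smul_zero, smul_zero]
      · push_neg at hcent
        have himg := he q hq0 hspan (fun j hj => by
          obtain ⟨c, hc⟩ := hj
          exact hcent j c hc)
        apply hpe
        intro i
        obtain ⟨c', hc', him⟩ := himg i
        obtain ⟨ci, hci, hpci⟩ := hrep i
        exact ⟨ci * c', mul_ne_zero hci hc', by rw [hpci, him, smul_smul]⟩
    · -- off the baseline
      have hmono : ∀ i j : Fin m,
          Submodule.span ℝ {camCenter (A i), camCenter (A j)} ≤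
            Submodule.span ℝ (Set.range fun k => camCenter (A k)) := by
        intro i j
        refine Submodule.span_mono ?_
        intro x hx
        rcases Set.mem_insert_iff.mp hx with h | h
        · exact ⟨i, h.symm⟩
        · exact ⟨j, (Set.mem_singleton_iff.mp h).symm⟩
      by_cases hq3 : q 3 = 0
      · -- point at infinity
        have hw : ∀ i j, i ≠ j →
            0 ≤ (principalRay (A i) ⬝ᵥ q) * (principalRay (A j) ⬝ᵥ q) := by
          intro i j hij
          have hbne := Chiral.bVec_ne_zero (A i) (A j) (hdist i j hij)
          have hcr : bVec (A i) (A j) ⨯₃ Chiral.dv (A j) q ≠ 0 := by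
            intro h0
            exact hspan (hmono i j
              (Chiral.mem_span_of_cross_eq_zero' (A i) (A j) (hfin i) (hfin j) q hq3 hbne h0))
          obtain ⟨ci, hci, hpi⟩ := hrep i
          obtain ⟨cj, hcj, hpj⟩ := hrep j
          have h2 := (hC i j).2
          rw [hpi, hpj, Chiral.E2_eq] at h2
          have hcisq : 0 < ci ^ 2 := lt_of_le_of_ne (sq_nonneg _) (Ne.symm (pow_ne_zero 2 hci))
          have hcjsq : 0 < cj ^ 2 := lt_of_le_of_ne (sq_nonneg _) (Ne.symm (pow_ne_zero 2 hcj))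
          have hF2 : 0 ≤ Chiral.F2 (A i) (A j) q := by nlinarith [mul_pos hcisq hcjsq]
          have hFeq := Chiral.F2_eq (A i) (A j) q
          have hdd : Chiral.dv (A i) q = Chiral.dv (A j) q := by
            have := Chiral.dv_sub (A i) (A j) (hfin i) (hfin j) q
            rw [hq3, zero_smul] at this
            exact sub_eq_zero.mp this
          rw [hdd] at hFeq
          have hX := Chiral.dot_self_pos hcr
          nlinarith [hF2, hX]
        obtain ⟨ε, hε, hεw⟩ := Chiral.exists_sign (fun i => principalRay (A i) ⬝ᵥ q) hw
        refine Chiral.mem_X A p hp0 q hq0 ε hε hrep ?_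
        refine Chiral.mem_closure_Sset A (ε • q) qs (fun i => ?_) ?_ hqs hqs3
        · rw [dotProduct_smul, smul_eq_mul]
          exact hεw i
        · rw [dotProduct_smul, smul_eq_mul, Chiral.nInf_dot, hq3, mul_zero]
      · -- finite point
        have hdepth : ∀ i, 0 ≤ (principalRay (A i) ⬝ᵥ q) * q 3 := by
          intro i
          obtain ⟨j, hj⟩ := exists_ne i
          have hbne := Chiral.bVec_ne_zero (A i) (A j) (hdist i j (Ne.symm hj))
          have hcr : Chiral.dv (A i) q ⨯₃ Chiral.dv (A j) q ≠ 0 := by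
            intro h0
            exact hspan (hmono i j
              (Chiral.mem_span_of_cross_eq_zero (A i) (A j) (hfin i) (hfin j) q hq3 hbne h0))
          obtain ⟨ci, hci, hpi⟩ := hrep i
          obtain ⟨cj, hcj, hpj⟩ := hrep j
          have h1 := (hC i j).1
          rw [hpi, hpj, Chiral.E1_eq] at h1
          have hcisq : 0 < ci ^ 2 := lt_of_le_of_ne (sq_nonneg _) (Ne.symm (pow_ne_zero 2 hci))
          have hcjsq : 0 < cj ^ 2 := lt_of_le_of_ne (sq_nonneg _) (Ne.symm (pow_ne_zero 2 hcj))
          have hF1 : 0 ≤ Chiral.F1 (A i) (A j) q := by nlinarith [mul_pos hcisq hcjsq]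
          have hq3F1 := Chiral.q3_mul_F1 (A i) (A j) (hfin i) (hfin j) q
          have hX := Chiral.dot_self_pos hcr
          have key : q 3 ^ 2 * Chiral.F1 (A i) (A j) q = ((principalRay (A i) ⬝ᵥ q) * q 3) *
              ((Chiral.dv (A i) q ⨯₃ Chiral.dv (A j) q) ⬝ᵥ
                (Chiral.dv (A i) q ⨯₃ Chiral.dv (A j) q)) := by
            linear_combination (q 3) * hq3F1
          have h5 : 0 ≤ ((principalRay (A i) ⬝ᵥ q) * q 3) *
              ((Chiral.dv (A i) q ⨯₃ Chiral.dv (A j) q) ⬝ᵥ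
                (Chiral.dv (A i) q ⨯₃ Chiral.dv (A j) q)) := by
            rw [← key]
            exact mul_nonneg (sq_nonneg _) hF1
          nlinarith [h5, hX]
        set ε : ℝ := if 0 < q 3 then 1 else -1 with hεdef
        have hε : ε = 1 ∨ ε = -1 := by
          rw [hεdef]
          split <;> simp
        have hεq3 : 0 < ε * q 3 := by
          rw [hεdef]
          by_cases h : 0 < q 3
          · rw [if_pos h]; linarith
          · rw [if_neg h]
            have : q 3 < 0 := lt_of_le_of_ne (not_lt.mp h) hq3
            nlinarith
        refine Chiral.mem_X A p hp0 q hq0 ε hε hrep ?_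
        refine Chiral.mem_closure_Sset A (ε • q) qs (fun i => ?_) ?_ hqs hqs3
        · rw [dotProduct_smul, smul_eq_mul]
          rcases hε with h | h <;> rw [h] at hεq3 ⊢ <;> nlinarith [hdepth i]
        · rw [dotProduct_smul, smul_eq_mul, Chiral.nInf_dot]
          exact hεq3.le
  constructor
  · apply Set.Subset.antisymm
    · rintro p ⟨hX, hpe⟩
      exact ⟨⟨⟨hX.1, by
        obtain ⟨hp0, q, hq, hrep⟩ := hX
        exact ⟨q, hq.2, hrep⟩⟩, hXC hX⟩, hpe⟩
    · rintro p ⟨hJC, hpe⟩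
      exact ⟨hmain ⟨hJC, hpe⟩, hpe⟩
  · intro p hp
    exact closure_minimal hXC (Chiral.isClosed_CSet A) hp.1
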